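/- arXiv:2510.23959 — 2 statements merged into one kernel-verified Lean document; each statement's English description precedes it below -/
import Mathlib

section
/- Let f : X → Y be a quasi-compact, open, surjective continuous map between spectral topological spaces. Then the Krull dimension of X is at least the Krull dimension of Y. -/
open Set Topology

section aux

variable {X Y : Type*} [TopologicalSpace X] [TopologicalSpace Y]

private lemma succ_castSucc' {m : ℕ} (j : Fin m) :
    (j.castSucc).succ = (j.succ).castSucc := by
  ext
  simp

private lemma eq_of_closure_singleton_eq [T0Space X] {a b : X}
    (h : closure ({a} : Set X) = closure {b}) : a = b :=
  (inseparable_iff_closure_eq.mpr h).eq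

/-- Going down for quasi-compact open maps of spectral spaces. -/
private lemma going_down
    [QuasiSober X] [CompactSpace X] [QuasiSeparatedSpace X]
    [T0Space Y] [CompactSpace Y] [QuasiSeparatedSpace Y]
    (hbaseX : ∀ (x : X) (U : Set X), IsOpen U → x ∈ U →
      ∃ V : Set X, IsOpen V ∧ IsCompact V ∧ x ∈ V ∧ V ⊆ U)
    (hbaseY : ∀ (y : Y) (U : Set Y), IsOpen U → y ∈ U →
      ∃ V : Set Y, IsOpen V ∧ IsCompact V ∧ y ∈ V ∧ V ⊆ U)
    (f : X → Y) (hf : Continuous f)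
    (hqc : ∀ U : Set Y, IsOpen U → IsCompact U → IsCompact (f ⁻¹' U))
    (hopen : IsOpenMap f)
    (x : X) (y' : Y) (hxy : f x ∈ closure ({y'} : Set Y)) :
    ∃ x' : X, f x' = y' ∧ x ∈ closure ({x'} : Set X) := by
  set C : Set X := f ⁻¹' (closure {y'}) with hC
  set S : Set (Set X) := {F | IsClosed F ∧ F ⊆ C ∧
    ∀ U : Set X, ∀ V : Set Y, (IsOpen U ∧ IsCompact U ∧ x ∈ U) →
      (IsOpen V ∧ IsCompact V ∧ y' ∈ V) → (F ∩ (U ∩ f ⁻¹' V)).Nonempty} with hS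
  -- each basic piece meets C
  have hCS : C ∈ S := by
    refine ⟨(isClosed_closure).preimage hf, subset_rfl, fun U V hU hV => ?_⟩
    -- find a point of U mapping to y'
    have h1 : y' ∈ f '' U := by
      have := mem_closure_iff.mp hxy (f '' U) (hopen U hU.1) ⟨x, hU.2.2, rfl⟩
      obtain ⟨z, hz1, hz2⟩ := this
      rwa [mem_singleton_iff.mp hz2] at hz1
    obtain ⟨u, huU, hu⟩ := h1
    refine ⟨u, ⟨?_, huU, by simp [hu, hV.2.2]⟩⟩
    show f u ∈ closure {y'}
    rw [hu]
    exact subset_closure rfl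
  -- the sets U ∩ f⁻¹ V are compact
  have hKcompact : ∀ U : Set X, ∀ V : Set Y, (IsOpen U ∧ IsCompact U ∧ x ∈ U) →
      (IsOpen V ∧ IsCompact V ∧ y' ∈ V) → IsCompact (U ∩ f ⁻¹' V) :=
    fun U V hU hV => QuasiSeparatedSpace.inter_isCompact U (f ⁻¹' V) hU.1 hU.2.1
      (hV.1.preimage hf) (hqc V hV.1 hV.2.1)
  -- Zorn: find a minimal member of S
  have Hzorn : ∀ c ⊆ S, IsChain (· ⊆ ·) c → c.Nonempty →
      ∃ lb ∈ S, ∀ s ∈ c, lb ⊆ s := by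
    intro c hcS hchain hcne
    refine ⟨⋂₀ c, ⟨isClosed_sInter fun F hF => (hcS hF).1, ?_, ?_⟩,
      fun F hF => sInter_subset_of_mem hF⟩
    · obtain ⟨F, hF⟩ := hcne
      exact (sInter_subset_of_mem hF).trans (hcS hF).2.1
    · intro U V hU hV
      by_contra hempty
      rw [Set.not_nonempty_iff_eq_empty] at hempty
      -- compactness argument
      have hK := hKcompact U V hU hV
      have hcover : (U ∩ f ⁻¹' V) ⊆ ⋃ F : c, ((F : Set X)ᶜ) := by
        intro z hz
        by_contra hznot
        simp only [mem_iUnion, not_exists, mem_compl_iff, not_not] at hznot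
        have : z ∈ ⋂₀ c ∩ (U ∩ f ⁻¹' V) := ⟨fun F hF => hznot ⟨F, hF⟩, hz⟩
        rw [hempty] at this
        exact this
      obtain ⟨t, ht⟩ := hK.elim_finite_subcover (fun F : c => ((F : Set X)ᶜ))
        (fun F => (hcS F.2).1.isOpen_compl) hcover
      -- t is nonempty since U ∩ f⁻¹ V is nonempty
      obtain ⟨F₀, hF₀⟩ := hcne
      obtain ⟨w, hw⟩ := (hcS hF₀).2.2 U V hU hV
      have htne : t.Nonempty := by
        rcases ht hw.2 with h
        simp only [Finset.mem_coe, mem_iUnion] at h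
        obtain ⟨F, hFt, -⟩ := h
        exact ⟨F, hFt⟩
      -- find a minimal element of the finite chain t
      have : ∃ F₁ ∈ t, ∀ F ∈ t, (F : Set X) ⊆ F₁ → (F : Set X) = F₁ := by
        obtain ⟨F₁, hF₁t, hmin⟩ := Set.Finite.exists_minimalFor
          (fun F : c => (F : Set X)) (t : Set c) t.finite_toSet
          (by exact_mod_cast htne)
        exact ⟨F₁, by exact_mod_cast hF₁t, fun F hFt hsub =>
          subset_antisymm hsub (hmin (by exact_mod_cast hFt) hsub)⟩
      obtain ⟨F₁, hF₁t, hF₁min⟩ := this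
      have hsub : ∀ F ∈ t, (F₁ : Set X) ⊆ F := by
        intro F hFt
        rcases hchain.total F₁.2 F.2 with h | h
        · exact h
        · exact (hF₁min F hFt h).symm.subset
      obtain ⟨w₁, hw₁⟩ := (hcS F₁.2).2.2 U V hU hV
      have := ht hw₁.2
      simp only [mem_iUnion] at this
      obtain ⟨F, hFt, hFc⟩ := this
      exact hFc (hsub F hFt hw₁.1)
  obtain ⟨m, -, hm⟩ := zorn_superset_nonempty S Hzorn C hCS
  -- m is irreducible
  have hmS := hm.prop
  have hm_ne : m.Nonempty := by
    obtain ⟨w, hw⟩ := hmS.2.2 univ univ ⟨isOpen_univ, isCompact_univ, mem_univ x⟩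
      ⟨isOpen_univ, isCompact_univ, mem_univ y'⟩
    exact ⟨w, hw.1⟩
  have hm_irr : IsIrreducible m := by
    refine ⟨hm_ne, fun u v hu hv hmu hmv => ?_⟩
    have key : ∀ w : Set X, IsOpen w → (m ∩ w).Nonempty →
        ∃ U : Set X, ∃ V : Set Y, (IsOpen U ∧ IsCompact U ∧ x ∈ U) ∧
          (IsOpen V ∧ IsCompact V ∧ y' ∈ V) ∧ m ∩ (U ∩ f ⁻¹' V) ⊆ w := by
      intro w hw hmw
      have hnotin : m ∩ wᶜ ∉ S := by
        intro hin
        have : m ⊆ m ∩ wᶜ := hm.2 hin  (inter_subset_left)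
        obtain ⟨z, hz⟩ := hmw
        exact (this hz.1).2 hz.2
      simp only [hS, Set.mem_setOf_eq, not_and] at hnotin
      have h1 : IsClosed (m ∩ wᶜ) := hmS.1.inter hw.isClosed_compl
      have h2 : m ∩ wᶜ ⊆ C := inter_subset_left.trans hmS.2.1
      obtain ⟨U, V, hU, hV, hemp⟩ := by
        have := hnotin h1 h2
        push_neg at this
        exact this
      refine ⟨U, V, hU, hV, fun z hz => ?_⟩
      by_contra hzw
      have : z ∈ m ∩ wᶜ ∩ (U ∩ f ⁻¹' V) := ⟨⟨hz.1, hzw⟩, hz.2⟩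
      rw [hemp] at this
      exact this
    obtain ⟨U₁, V₁, hU₁, hV₁, hsub₁⟩ := key u hu hmu
    obtain ⟨U₂, V₂, hU₂, hV₂, hsub₂⟩ := key v hv hmv
    have hU₃ : IsOpen (U₁ ∩ U₂) ∧ IsCompact (U₁ ∩ U₂) ∧ x ∈ U₁ ∩ U₂ :=
      ⟨hU₁.1.inter hU₂.1,
        QuasiSeparatedSpace.inter_isCompact U₁ U₂ hU₁.1 hU₁.2.1 hU₂.1 hU₂.2.1,
        hU₁.2.2, hU₂.2.2⟩
    have hV₃ : IsOpen (V₁ ∩ V₂) ∧ IsCompact (V₁ ∩ V₂) ∧ y' ∈ V₁ ∩ V₂ :=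
      ⟨hV₁.1.inter hV₂.1,
        QuasiSeparatedSpace.inter_isCompact V₁ V₂ hV₁.1 hV₁.2.1 hV₂.1 hV₂.2.1,
        hV₁.2.2, hV₂.2.2⟩
    obtain ⟨z, hz⟩ := hmS.2.2 (U₁ ∩ U₂) (V₁ ∩ V₂) hU₃ hV₃
    refine ⟨z, hz.1, ?_, ?_⟩
    · exact hsub₁ ⟨hz.1, hz.2.1.1, hz.2.2.1⟩
    · exact hsub₂ ⟨hz.1, hz.2.1.2, hz.2.2.2⟩
  -- take a generic point
  obtain ⟨z, hz⟩ := QuasiSober.sober hm_irr hmS.1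
  have hzm : closure ({z} : Set X) = m := hz
  -- z lies in every basic piece
  have hzin : ∀ U : Set X, ∀ V : Set Y, (IsOpen U ∧ IsCompact U ∧ x ∈ U) →
      (IsOpen V ∧ IsCompact V ∧ y' ∈ V) → z ∈ U ∩ f ⁻¹' V := by
    intro U V hU hV
    obtain ⟨w, hw⟩ := hmS.2.2 U V hU hV
    have hwz : w ∈ closure ({z} : Set X) := hzm ▸ hw.1
    have := mem_closure_iff.mp hwz (U ∩ f ⁻¹' V)
      (hU.1.inter ((hV.1.preimage hf))) hw.2
    obtain ⟨s, hs1, hs2⟩ := this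
    rwa [← mem_singleton_iff.mp hs2]
  refine ⟨z, ?_, ?_⟩
  · -- f z = y'
    have h1 : f z ∈ closure ({y'} : Set Y) := hmS.2.1 (hzm ▸ subset_closure rfl)
    have h2 : y' ∈ closure ({f z} : Set Y) := by
      rw [mem_closure_iff]
      intro O hO hy'O
      obtain ⟨V, hV1, hV2, hV3, hV4⟩ := hbaseY y' O hO hy'O
      have := hzin univ V ⟨isOpen_univ, isCompact_univ, mem_univ x⟩ ⟨hV1, hV2, hV3⟩
      exact ⟨f z, hV4 this.2, rfl⟩
    exact eq_of_closure_singleton_eq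
      (subset_antisymm
        (closure_minimal (singleton_subset_iff.mpr h2) isClosed_closure)
        (closure_minimal (singleton_subset_iff.mpr h1) isClosed_closure)) |>.symm
  · -- x ∈ closure {z}
    rw [mem_closure_iff]
    intro O hO hxO
    obtain ⟨U, hU1, hU2, hU3, hU4⟩ := hbaseX x O hO hxO
    have := hzin U univ ⟨hU1, hU2, hU3⟩ ⟨isOpen_univ, isCompact_univ, mem_univ y'⟩
    exact ⟨z, hU4 this.1, rfl⟩

/-- Lifting specialization chains along a map satisfying going down. -/
private lemma lift_chain (f : X → Y)
    (GD : ∀ (x : X) (y' : Y), f x ∈ closure ({y'} : Set Y) →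
      ∃ x' : X, f x' = y' ∧ x ∈ closure ({x'} : Set X))
    (hsurj : Function.Surjective f) :
    ∀ (n : ℕ) (y : Fin (n + 1) → Y),
      (∀ i : Fin n, y i.castSucc ∈ closure ({y i.succ} : Set Y)) →
      ∃ x : Fin (n + 1) → X, (∀ i, f (x i) = y i) ∧
        ∀ i : Fin n, x i.castSucc ∈ closure ({x i.succ} : Set X) := by
  intro n
  induction n with
  | zero =>
    intro y _
    obtain ⟨x0, hx0⟩ := hsurj (y 0)
    refine ⟨fun _ => x0, fun i => ?_, fun i => i.elim0⟩
    have hi : i = 0 := Fin.ext (Nat.lt_one_iff.mp i.isLt)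
    rw [hi]
    exact hx0
  | succ n ih =>
    intro y hy
    obtain ⟨x₀, hx₀f, hx₀c⟩ := ih (fun i => y i.castSucc) (fun i => by
      have h := hy i.castSucc
      rw [succ_castSucc' i] at h
      exact h)
    have hlast : f (x₀ (Fin.last n)) ∈ closure ({y (Fin.last (n + 1))} : Set Y) := by
      rw [hx₀f (Fin.last n)]
      have h := hy (Fin.last n)
      rwa [Fin.succ_last] at h
    obtain ⟨x', hx'f, hx'c⟩ := GD (x₀ (Fin.last n)) (y (Fin.last (n + 1))) hlast
    refine ⟨Fin.snoc x₀ x', fun i => ?_, fun i => ?_⟩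
    · refine Fin.lastCases ?_ (fun j => ?_) i
      · rw [Fin.snoc_last]
        exact hx'f
      · rw [Fin.snoc_castSucc]
        exact hx₀f j
    · refine Fin.lastCases ?_ (fun j => ?_) i
      · rw [Fin.succ_last, Fin.snoc_last, Fin.snoc_castSucc]
        exact hx'c
      · rw [succ_castSucc' j, Fin.snoc_castSucc, Fin.snoc_castSucc]
        exact hx₀c j

end aux

/-- Let `f : X → Y` be a quasi-compact, open, surjective continuous map between spectral
topological spaces. Then the Krull dimension of `X` is at least the Krull dimension of `Y`.
Spectral means: sober (`QuasiSober` + `T0Space`), quasi-compact (`CompactSpace`),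
quasi-separated (`QuasiSeparatedSpace`), and the quasi-compact opens form a base. -/
theorem stmt_3 {X Y : Type*} [TopologicalSpace X] [TopologicalSpace Y]
    [QuasiSober X] [T0Space X] [CompactSpace X] [QuasiSeparatedSpace X]
    [QuasiSober Y] [T0Space Y] [CompactSpace Y] [QuasiSeparatedSpace Y]
    (hbaseX : ∀ (x : X) (U : Set X), IsOpen U → x ∈ U →
      ∃ V : Set X, IsOpen V ∧ IsCompact V ∧ x ∈ V ∧ V ⊆ U)
    (hbaseY : ∀ (y : Y) (U : Set Y), IsOpen U → y ∈ U →
      ∃ V : Set Y, IsOpen V ∧ IsCompact V ∧ y ∈ V ∧ V ⊆ U)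
    (f : X → Y) (hf : Continuous f)
    (hqc : ∀ U : Set Y, IsOpen U → IsCompact U → IsCompact (f ⁻¹' U))
    (hopen : IsOpenMap f) (hsurj : Function.Surjective f) :
    topologicalKrullDim Y ≤ topologicalKrullDim X := by
  have GD := going_down hbaseX hbaseY f hf hqc hopen
  unfold topologicalKrullDim Order.krullDim
  refine iSup_le fun p => ?_
  -- generic points of the chain in Y
  set y : Fin (p.length + 1) → Y :=
    fun i => (p.toFun i).isIrreducible'.genericPoint with hy_def
  have hy : ∀ i, closure ({y i} : Set Y) = ((p.toFun i) : Set Y) := fun i =>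
    (p.toFun i).isIrreducible'.isGenericPoint_genericPoint (p.toFun i).isClosed'
  have hychain : ∀ i : Fin p.length, y i.castSucc ∈ closure ({y i.succ} : Set Y) := by
    intro i
    have h1 : y i.castSucc ∈ ((p.toFun i.castSucc) : Set Y) := by
      rw [← hy]
      exact subset_closure rfl
    have h2 : ((p.toFun i.castSucc) : Set Y) ⊆ ((p.toFun i.succ) : Set Y) := by
      exact_mod_cast (p.step i).le
    rw [hy]
    exact h2 h1
  obtain ⟨x, hxf, hxc⟩ := lift_chain f GD hsurj p.length y hychain
  -- build the lifted chain in X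
  refine le_iSup_of_le
    (⟨p.length, fun i => ⟨closure {x i}, isIrreducible_singleton.closure,
      isClosed_closure⟩, fun i => ?_⟩ : LTSeries (TopologicalSpace.IrreducibleCloseds X))
    le_rfl
  have hle : closure ({x i.castSucc} : Set X) ⊆ closure ({x i.succ} : Set X) :=
    closure_minimal (singleton_subset_iff.mpr (hxc i)) isClosed_closure
  simp only [Set.mem_setOf_eq]
  refine lt_of_le_of_ne ?_ ?_
  · exact hle
  · intro heq
    have hcar : closure ({x i.castSucc} : Set X) = closure ({x i.succ} : Set X) :=
      congrArg (fun s : TopologicalSpace.IrreducibleCloseds X => s.carrier) heq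
    have hx_eq : x i.castSucc = x i.succ := eq_of_closure_singleton_eq hcar
    have hy_eq : y i.castSucc = y i.succ := by
      rw [← hxf i.castSucc, ← hxf i.succ, hx_eq]
    have : ((p.toFun i.castSucc) : Set Y) = ((p.toFun i.succ) : Set Y) := by
      rw [← hy, ← hy, hy_eq]
    exact (p.step i).ne (SetLike.coe_injective this)
end

section
/- Let {Xᵢ}_{i∈I} be a cofiltered system of nonempty spectral topological spaces with quasi-compact and surjective transition maps, and X = lim Xᵢ the inverse limit. Then each projection πᵢ : X → Xᵢ is surjective. -/
open TopologicalSpace Set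

/-- The subbasis of the patch (constructible) topology: quasi-compact open sets and
complements of quasi-compact open sets. -/
def patchSub (α : Type*) [TopologicalSpace α] : Set (Set α) :=
  {s | (IsOpen s ∧ IsCompact s) ∨ ∃ U : Set α, IsOpen U ∧ IsCompact U ∧ s = Uᶜ}

/-- The patch (constructible) topology. -/
def patchTop (α : Type*) [TopologicalSpace α] : TopologicalSpace α :=
  TopologicalSpace.generateFrom (patchSub α)

lemma patch_le_nhds_iff {α : Type*} [TopologicalSpace α] {F : Filter α} {x : α} :
    F ≤ @nhds α (patchTop α) x ↔ ∀ s ∈ patchSub α, x ∈ s → s ∈ F := by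
  rw [patchTop, TopologicalSpace.nhds_generateFrom, le_iInf₂_iff]
  constructor
  · intro h s hs hxs
    exact Filter.le_principal_iff.1 (h s ⟨hxs, hs⟩)
  · intro h s hs
    exact Filter.le_principal_iff.2 (h s hs.2 hs.1)

lemma patch_t2 {α : Type*} [TopologicalSpace α] [T0Space α]
    (hbase : ∀ (x : α) (U : Set α), IsOpen U → x ∈ U →
      ∃ V : Set α, IsOpen V ∧ IsCompact V ∧ x ∈ V ∧ V ⊆ U) :
    @T2Space α (patchTop α) := by
  refine @T2Space.mk α (patchTop α) ?_
  intro x y hxy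
  obtain ⟨U, hU, hxor⟩ := exists_isOpen_xor'_mem hxy
  rcases hxor with ⟨hxU, hyU⟩ | ⟨hyU, hxU⟩
  · obtain ⟨V, hVo, hVc, hxV, hVU⟩ := hbase x U hU hxU
    exact ⟨V, Vᶜ, isOpen_generateFrom_of_mem (Or.inl ⟨hVo, hVc⟩),
      isOpen_generateFrom_of_mem (Or.inr ⟨V, hVo, hVc, rfl⟩), hxV,
      fun hyV => hyU (hVU hyV), disjoint_compl_right⟩
  · obtain ⟨V, hVo, hVc, hyV, hVU⟩ := hbase y U hU hyU
    exact ⟨Vᶜ, V, isOpen_generateFrom_of_mem (Or.inr ⟨V, hVo, hVc, rfl⟩),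
      isOpen_generateFrom_of_mem (Or.inl ⟨hVo, hVc⟩),
      fun hxV => hxU (hVU hxV), hyV, disjoint_compl_left⟩

lemma patch_continuous {α β : Type*} [TopologicalSpace α] [TopologicalSpace β] {g : α → β}
    (hg : Continuous g) (hqc : ∀ U : Set β, IsOpen U → IsCompact U → IsCompact (g ⁻¹' U)) :
    @Continuous α β (patchTop α) (patchTop β) g := by
  rw [patchTop, patchTop]
  rw [continuous_generateFrom_iff]
  rintro s (⟨hso, hsc⟩ | ⟨U, hUo, hUc, rfl⟩)
  · exact isOpen_generateFrom_of_mem (Or.inl ⟨hso.preimage hg, hqc s hso hsc⟩)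
  · rw [Set.preimage_compl]
    exact isOpen_generateFrom_of_mem (Or.inr ⟨g ⁻¹' U, hUo.preimage hg, hqc U hUo hUc, rfl⟩)

lemma patch_compact {α : Type*} [TopologicalSpace α] [CompactSpace α] [QuasiSober α]
    [QuasiSeparatedSpace α]
    (hbase : ∀ (x : α) (U : Set α), IsOpen U → x ∈ U →
      ∃ V : Set α, IsOpen V ∧ IsCompact V ∧ x ∈ V ∧ V ⊆ U) :
    @CompactSpace α (patchTop α) := by
  refine @CompactSpace.mk α (patchTop α) ?_
  rw [@isCompact_iff_ultrafilter_le_nhds α (patchTop α)]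
  intro F _
  classical
  set S : Set (Set α) := {U | IsOpen U ∧ IsCompact U ∧ U ∉ F} with hS
  set C : Set α := ⋂ U ∈ S, Uᶜ with hC
  have hmemC : ∀ z, z ∈ C ↔ ∀ U ∈ S, z ∉ U := by
    intro z; simp [hC]
  have meets : ∀ Q : Set α, IsOpen Q → IsCompact Q → Q ∈ F → (Q ∩ C).Nonempty := by
    intro Q hQo hQc hQF
    by_contra h
    rw [Set.not_nonempty_iff_eq_empty] at h
    have hcover : Q ⊆ ⋃ (U : S), (U : Set α) := by
      intro y hy
      have hyC : y ∉ C := fun hyC => Set.eq_empty_iff_forall_notMem.1 h y ⟨hy, hyC⟩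
      rw [hmemC] at hyC
      push_neg at hyC
      obtain ⟨U, hU, hyU⟩ := hyC
      exact Set.mem_iUnion.2 ⟨⟨U, hU⟩, hyU⟩
    obtain ⟨t, ht⟩ := hQc.elim_finite_subcover (fun U : S => (U : Set α))
      (fun U => U.2.1) hcover
    have hun : (⋃ U ∈ t, (U : Set α)) ∈ F := Filter.mem_of_superset hQF ht
    obtain ⟨U, _, hUF⟩ := (Ultrafilter.finite_biUnion_mem_iff t.finite_toSet).1 hun
    exact U.2.2.2 hUF
  have hCne : C.Nonempty := by
    simpa using meets univ isOpen_univ isCompact_univ F.univ_mem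
  have hCclosed : IsClosed C :=
    isClosed_biInter fun U hU => hU.1.isClosed_compl
  have hpre : IsPreirreducible C := by
    rintro u v hu hv ⟨z, hzC, hzu⟩ ⟨w, hwC, hwv⟩
    obtain ⟨V₁, hV₁o, hV₁c, hzV₁, hV₁u⟩ := hbase z u hu hzu
    obtain ⟨V₂, hV₂o, hV₂c, hwV₂, hV₂v⟩ := hbase w v hv hwv
    have hV₁F : V₁ ∈ F := by
      by_contra h
      exact (hmemC z).1 hzC V₁ ⟨hV₁o, hV₁c, h⟩ hzV₁
    have hV₂F : V₂ ∈ F := by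
      by_contra h
      exact (hmemC w).1 hwC V₂ ⟨hV₂o, hV₂c, h⟩ hwV₂
    obtain ⟨p, hp⟩ := meets (V₁ ∩ V₂) (hV₁o.inter hV₂o)
      (QuasiSeparatedSpace.inter_isCompact V₁ V₂ hV₁o hV₁c hV₂o hV₂c)
      (Filter.inter_mem hV₁F hV₂F)
    exact ⟨p, hp.2, hV₁u hp.1.1, hV₂v hp.1.2⟩
  obtain ⟨ξ, hgen⟩ := QuasiSober.sober ⟨hCne, hpre⟩ hCclosed
  have hξC : ξ ∈ C := hgen ▸ subset_closure rfl
  refine ⟨ξ, Set.mem_univ _, ?_⟩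
  rw [patch_le_nhds_iff]
  rintro s (⟨hso, hsc⟩ | ⟨U, hUo, hUc, rfl⟩) hxs
  · by_contra h
    exact (hmemC ξ).1 hξC s ⟨hso, hsc, h⟩ hxs
  · refine Ultrafilter.compl_mem_iff_notMem.2 ?_
    intro hUF
    obtain ⟨p, hpU, hpC⟩ := meets U hUo hUc hUF
    have hpcl : p ∈ closure ({ξ} : Set α) := by rw [hgen]; exact hpC
    obtain ⟨q, hqU, hq⟩ := mem_closure_iff.1 hpcl U hUo hpU
    exact hxs (hq ▸ hqU)

lemma exists_section {ι : Type*} [Preorder ι] [IsDirected ι (· ≤ ·)] [Nonempty ι]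
    (Y : ι → Type*) [∀ j, TopologicalSpace (Y j)] [∀ j, Nonempty (Y j)]
    [∀ j, CompactSpace (Y j)] [∀ j, T2Space (Y j)]
    (f : ∀ ⦃i j : ι⦄, i ≤ j → Y j → Y i)
    (hcont : ∀ ⦃i j : ι⦄ (h : i ≤ j), Continuous (f h))
    (hcomp : ∀ ⦃i j k : ι⦄ (hij : i ≤ j) (hjk : j ≤ k) (x : Y k),
      f hij (f hjk x) = f (hij.trans hjk) x)
    (hsurj : ∀ ⦃i j : ι⦄ (h : i ≤ j), Function.Surjective (f h))
    (i : ι) (x : Y i) :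
    ∃ u : ∀ j, Y j, (∀ ⦃j k : ι⦄ (h : j ≤ k), f h (u k) = u j) ∧ u i = x := by
  classical
  let Γ := Σ' (j k : ι), j ≤ k
  let Z : Γ → Set (∀ j, Y j) := fun g => {u | f g.2.2 (u g.2.1) = u g.1}
  have hZc : ∀ g, IsClosed (Z g) := fun g =>
    isClosed_eq ((hcont g.2.2).comp (continuous_apply g.2.1)) (continuous_apply g.1)
  have hsc : IsClosed {u : ∀ j, Y j | u i = x} :=
    isClosed_eq (continuous_apply i) continuous_const
  have key := (hsc.isCompact).inter_iInter_nonempty Z hZc ?_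
  · obtain ⟨u, hu1, hu2⟩ := key
    refine ⟨u, ?_, hu1⟩
    intro j k h
    exact Set.mem_iInter.1 hu2 ⟨j, k, h⟩
  · intro t
    obtain ⟨m, hm⟩ := Finset.exists_le
      (insert i ((t.image fun g => g.1) ∪ t.image fun g => g.2.1))
    have him : i ≤ m := hm i (by simp)
    obtain ⟨y, hy⟩ := hsurj him x
    refine ⟨fun j => if h : j ≤ m then f h y else Classical.arbitrary _, ?_, ?_⟩
    · show (if h : i ≤ m then f h y else Classical.arbitrary _) = x
      rw [dif_pos him]; exact hy
    · rw [Set.mem_iInter₂]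
      intro g hg
      have hj : g.1 ≤ m := hm g.1 (by
        simp only [Finset.mem_insert, Finset.mem_union, Finset.mem_image]
        exact Or.inr (Or.inl ⟨g, hg, rfl⟩))
      have hk : g.2.1 ≤ m := hm g.2.1 (by
        simp only [Finset.mem_insert, Finset.mem_union, Finset.mem_image]
        exact Or.inr (Or.inr ⟨g, hg, rfl⟩))
      show f g.2.2 (if h : g.2.1 ≤ m then f h y else Classical.arbitrary _) =
        (if h : g.1 ≤ m then f h y else Classical.arbitrary _)
      rw [dif_pos hk, dif_pos hj]
      exact hcomp g.2.2 hk y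

/-- Let `{Xᵢ}` be a cofiltered system of nonempty spectral spaces with quasi-compact and
surjective transition maps, and `X = lim Xᵢ` the inverse limit. Then each projection
`πᵢ : X → Xᵢ` is surjective. -/
theorem stmt_5 {ι : Type*} [Preorder ι] [IsDirected ι (· ≤ ·)] [Nonempty ι]
    (X : ι → Type*) [∀ i, TopologicalSpace (X i)] [∀ i, Nonempty (X i)]
    [∀ i, CompactSpace (X i)] [∀ i, QuasiSober (X i)] [∀ i, T0Space (X i)]
    [∀ i, QuasiSeparatedSpace (X i)]
    (hbase : ∀ i (x : X i) (U : Set (X i)), IsOpen U → x ∈ U →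
      ∃ V : Set (X i), IsOpen V ∧ IsCompact V ∧ x ∈ V ∧ V ⊆ U)
    (f : ∀ ⦃i j : ι⦄, i ≤ j → X j → X i)
    (hcont : ∀ ⦃i j : ι⦄ (h : i ≤ j), Continuous (f h))
    (hid : ∀ (i : ι) (x : X i), f (le_refl i) x = x)
    (hcomp : ∀ ⦃i j k : ι⦄ (hij : i ≤ j) (hjk : j ≤ k) (x : X k),
      f hij (f hjk x) = f (hij.trans hjk) x)
    (hqc : ∀ ⦃i j : ι⦄ (h : i ≤ j) (U : Set (X i)), IsOpen U → IsCompact U →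
      IsCompact (f h ⁻¹' U))
    (hsurj : ∀ ⦃i j : ι⦄ (h : i ≤ j), Function.Surjective (f h)) (i : ι) :
    Function.Surjective (fun u : {u : ∀ j, X j // ∀ ⦃j k : ι⦄ (h : j ≤ k), f h (u k) = u j} =>
      u.1 i) := by
  intro x
  obtain ⟨u, hu, hui⟩ := @exists_section ι _ _ _ X (fun j => patchTop (X j))
    (fun j => inferInstance) (fun j => patch_compact (hbase j)) (fun j => patch_t2 (hbase j))
    f (fun j k h => patch_continuous (hcont h) (hqc h)) hcomp hsurj i x
  exact ⟨⟨u, hu⟩, hui⟩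
end
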